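/- Let r ≥ 1, let α > 0 and 0 < β < 1/2 be real numbers, and let w be any r×r complex matrix. Then the Hermitian matrix I_r − (α·β / (1 + α·‖w‖_F²))·(w·wᴴ − wᴴ·w) is positive definite. (This is the pointwise matrix form of the claim that the eigenvalues of the endomorphism 𝔠_{αβ}(h) = (αβ/(1+α|φ|²_h))Λ[φ,φ*ʰ] are bounded in norm by 2β, so that for β < 1/2 the Hermitian operator Id_E − 𝔠_{αβ}(h) is strictly positive and the metric ĥ = h(Id_E − 𝔠_{αβ}(h)) appearing in the definition of balanced metrics is well defined.) -/

import Mathlib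

open Matrix Finset
open scoped ComplexOrder

lemma dot_conjT_mulVec {r : ℕ} (w : Matrix (Fin r) (Fin r) ℂ) (x : Fin r → ℂ) :
    star x ⬝ᵥ ((w * wᴴ) *ᵥ x) = star (wᴴ *ᵥ x) ⬝ᵥ (wᴴ *ᵥ x) := by
  rw [← mulVec_mulVec, dotProduct_mulVec, star_mulVec, conjTranspose_conjTranspose]

lemma dot_self_eq {r : ℕ} (y : Fin r → ℂ) :
    star y ⬝ᵥ y = ((∑ i, Complex.normSq (y i) : ℝ) : ℂ) := by
  simp [dotProduct, Complex.normSq_eq_conj_mul_self]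

lemma cs_bound {r : ℕ} (w : Matrix (Fin r) (Fin r) ℂ) (x : Fin r → ℂ) :
    ∑ i, Complex.normSq ((wᴴ *ᵥ x) i)
      ≤ (∑ i, ∑ j, Complex.normSq (w i j)) * ∑ i, Complex.normSq (x i) := by
  have key : ∀ i, Complex.normSq ((wᴴ *ᵥ x) i)
      ≤ (∑ j, Complex.normSq (w j i)) * ∑ j, Complex.normSq (x j) := by
    intro i
    have h1 : ‖(wᴴ *ᵥ x) i‖ ≤ ∑ j, ‖w j i‖ * ‖x j‖ := by
      simp only [mulVec, dotProduct, conjTranspose_apply]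
      refine (norm_sum_le Finset.univ fun j => (starRingEnd ℂ) (w j i) * x j).trans_eq ?_
      simp
    calc Complex.normSq ((wᴴ *ᵥ x) i) = ‖(wᴴ *ᵥ x) i‖ ^ 2 := (Complex.sq_norm _).symm
      _ ≤ (∑ j, ‖w j i‖ * ‖x j‖) ^ 2 := by
          exact pow_le_pow_left₀ (norm_nonneg _) h1 2
      _ ≤ (∑ j, ‖w j i‖ ^ 2) * ∑ j, ‖x j‖ ^ 2 :=
          Finset.sum_mul_sq_le_sq_mul_sq _ _ _
      _ = (∑ j, Complex.normSq (w j i)) * ∑ j, Complex.normSq (x j) := by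
          simp [Complex.sq_norm]
  calc ∑ i, Complex.normSq ((wᴴ *ᵥ x) i)
      ≤ ∑ i, (∑ j, Complex.normSq (w j i)) * ∑ j, Complex.normSq (x j) :=
        Finset.sum_le_sum fun i _ => key i
    _ = (∑ i, ∑ j, Complex.normSq (w i j)) * ∑ i, Complex.normSq (x i) := by
        rw [← Finset.sum_mul, Finset.sum_comm]

lemma trace_re_eq {r : ℕ} (w : Matrix (Fin r) (Fin r) ℂ) :
    (wᴴ * w).trace.re = ∑ i, ∑ j, Complex.normSq (w i j) := by
  rw [Matrix.trace]
  rw [Complex.re_sum]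
  rw [Finset.sum_comm]
  refine Finset.sum_congr rfl fun i _ => ?_
  simp [Matrix.diag, Matrix.mul_apply, ← Complex.normSq_eq_conj_mul_self, Complex.re_sum]

theorem id_sub_scaled_selfCommutator_posDef
    (r : ℕ) (hr : 1 ≤ r) (α β : ℝ) (hα : 0 < α) (hβ : 0 < β) (hβ' : β < 1 / 2)
    (w : Matrix (Fin r) (Fin r) ℂ) :
    ((1 : Matrix (Fin r) (Fin r) ℂ)
      - (α * β / (1 + α * ((wᴴ * w).trace.re)) : ℝ) • (w * wᴴ - wᴴ * w)).PosDef := by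
  set t : ℝ := (wᴴ * w).trace.re with ht_def
  have ht : t = ∑ i, ∑ j, Complex.normSq (w i j) := trace_re_eq w
  have ht0 : 0 ≤ t := by
    rw [ht]
    exact Finset.sum_nonneg fun i _ => Finset.sum_nonneg fun j _ => Complex.normSq_nonneg _
  have hden : 0 < 1 + α * t := by positivity
  set c : ℝ := α * β / (1 + α * t) with hc_def
  have hc0 : 0 ≤ c := by rw [hc_def]; positivity
  have hct : c * t ≤ β := by
    rw [hc_def, div_mul_eq_mul_div, div_le_iff₀ hden]
    nlinarith
  rw [posDef_iff_dotProduct_mulVec]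
  constructor
  · have hA : (w * wᴴ - wᴴ * w).IsHermitian :=
      (isHermitian_mul_conjTranspose_self w).sub (isHermitian_conjTranspose_mul_self w)
    unfold Matrix.IsHermitian
    rw [conjTranspose_sub, conjTranspose_smul, conjTranspose_one, hA.eq, star_trivial]
  · intro x hx
    have hsmul : (c • (w * wᴴ - wᴴ * w)) = ((c : ℂ) • (w * wᴴ - wᴴ * w)) := by
      ext i j; simp [Complex.real_smul]
    have key : star x ⬝ᵥ (((1 : Matrix (Fin r) (Fin r) ℂ)
        - c • (w * wᴴ - wᴴ * w)) *ᵥ x)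
        = (((∑ i, Complex.normSq (x i))
            - c * ((∑ i, Complex.normSq ((wᴴ *ᵥ x) i))
                   - ∑ i, Complex.normSq ((w *ᵥ x) i)) : ℝ) : ℂ) := by
      have h1 := dot_conjT_mulVec w x
      have h2 := dot_conjT_mulVec wᴴ x
      rw [conjTranspose_conjTranspose] at h2
      rw [hsmul, sub_mulVec, one_mulVec, dotProduct_sub, smul_mulVec,
        dotProduct_smul, smul_eq_mul, sub_mulVec, dotProduct_sub, h1, h2,
        dot_self_eq, dot_self_eq, dot_self_eq]
      push_cast
      ring
    rw [key]
    rw [Complex.zero_lt_real]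
    set nx : ℝ := ∑ i, Complex.normSq (x i)
    set a : ℝ := ∑ i, Complex.normSq ((wᴴ *ᵥ x) i)
    set b : ℝ := ∑ i, Complex.normSq ((w *ᵥ x) i)
    have hb0 : 0 ≤ b := Finset.sum_nonneg fun i _ => Complex.normSq_nonneg _
    have hnx : 0 < nx := by
      obtain ⟨i, hi⟩ := Function.ne_iff.mp hx
      exact Finset.sum_pos' (fun j _ => Complex.normSq_nonneg _)
        ⟨i, Finset.mem_univ i, Complex.normSq_pos.mpr hi⟩
    have ha : a ≤ t * nx := by rw [ht]; exact cs_bound w x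
    nlinarith [mul_le_mul_of_nonneg_left ha hc0, mul_nonneg hc0 hb0,
      mul_le_mul_of_nonneg_right hct (le_of_lt hnx),
      mul_pos hnx (by linarith : (0:ℝ) < 1 - β)]
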